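/- arXiv:1803.03142 — 2 statements merged into one kernel-verified Lean document; each statement's English description precedes it below -/
import Mathlib

section
/- Let L be a finite-dimensional complex filiform Lie algebra with dim L ≥ 3. Then L admits a local automorphism which is not an automorphism, i.e. there exists a linear map Δ : L → L such that for every x ∈ L there is an automorphism Φ_x of L with Δ(x) = Φ_x(x), but Δ itself is not an automorphism of L. -/
open LieModule

lemma lcs_bracket_mem {R L : Type*} [CommRing R] [LieRing L] [LieAlgebra R L]
    (i : ℕ) : ∀ (j : ℕ) (w u : L), w ∈ lowerCentralSeries R L L i →
      u ∈ lowerCentralSeries R L L j → ⁅w, u⁆ ∈ lowerCentralSeries R L L (i + j + 1) := by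
  induction i with
  | zero =>
    intro j w u _ hu
    have h : ⁅w, u⁆ ∈ ⁅(⊤ : LieIdeal R L), lowerCentralSeries R L L j⁆ :=
      LieSubmodule.lie_mem_lie (LieSubmodule.mem_top w) hu
    rw [← LieModule.lowerCentralSeries_succ] at h
    simpa using h
  | succ i ih =>
    intro j w u hw hu
    rw [LieModule.lowerCentralSeries_succ, ← LieSubmodule.mem_toSubmodule,
      LieSubmodule.lieIdeal_oper_eq_linear_span'] at hw
    have key : ∀ v : L, v ∈ Submodule.span R {m | ∃ x ∈ (⊤ : LieIdeal R L),
        ∃ n ∈ lowerCentralSeries R L L i, ⁅x, n⁆ = m} →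
        ⁅v, u⁆ ∈ lowerCentralSeries R L L (i + 1 + j + 1) := by
      intro v hv
      induction hv using Submodule.span_induction with
      | mem m hm =>
        obtain ⟨x, -, nn, hn, rfl⟩ := hm
        have h1 : ⁅x, ⁅nn, u⁆⁆ ∈ lowerCentralSeries R L L (i + 1 + j + 1) := by
          have hnu := ih j nn u hn hu
          have h : ⁅x, ⁅nn, u⁆⁆ ∈ ⁅(⊤ : LieIdeal R L), lowerCentralSeries R L L (i + j + 1)⁆ :=
            LieSubmodule.lie_mem_lie (LieSubmodule.mem_top x) hnu
          rw [← LieModule.lowerCentralSeries_succ] at h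
          have e : i + j + 1 + 1 = i + 1 + j + 1 := by omega
          rwa [e] at h
        have h2 : ⁅nn, ⁅x, u⁆⁆ ∈ lowerCentralSeries R L L (i + 1 + j + 1) := by
          have hxu : ⁅x, u⁆ ∈ lowerCentralSeries R L L (j + 1) := by
            have h : ⁅x, u⁆ ∈ ⁅(⊤ : LieIdeal R L), lowerCentralSeries R L L j⁆ :=
              LieSubmodule.lie_mem_lie (LieSubmodule.mem_top x) hu
            rwa [← LieModule.lowerCentralSeries_succ] at h
          have h := ih (j + 1) nn ⁅x, u⁆ hn hxu
          have e : i + (j + 1) + 1 = i + 1 + j + 1 := by omega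
          rwa [e] at h
        have e : ⁅⁅x, nn⁆, u⁆ = ⁅x, ⁅nn, u⁆⁆ - ⁅nn, ⁅x, u⁆⁆ := by
          rw [leibniz_lie x nn u]; abel
        rw [e]
        exact sub_mem h1 h2
      | zero => simp only [zero_lie]; exact (lowerCentralSeries R L L (i + 1 + j + 1)).zero_mem
      | add a b _ _ ha hb => rw [add_lie]; exact add_mem ha hb
      | smul t a _ ha => rw [smul_lie]; exact Submodule.smul_mem _ t ha
    exact key w hw

theorem filiform_admits_localAut_not_aut (L : Type*) [LieRing L] [LieAlgebra ℂ L]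
    [Module.Finite ℂ L] (hdim : 3 ≤ Module.finrank ℂ L)
    [LieRing.IsNilpotent L]
    (hfil : ∀ k : ℕ, 1 ≤ k → k ≤ Module.finrank ℂ L - 1 →
      Module.finrank ℂ (LieModule.lowerCentralSeries ℂ L L k)
        = Module.finrank ℂ L - k - 1) :
    ∃ Δ : L →ₗ[ℂ] L,
      (∀ x : L, ∃ Φ : L →ₗ[ℂ] L,
        (Function.Bijective Φ ∧ ∀ a b : L, Φ ⁅a, b⁆ = ⁅Φ a, Φ b⁆) ∧ Δ x = Φ x) ∧
      ¬ (Function.Bijective Δ ∧ ∀ a b : L, Δ ⁅a, b⁆ = ⁅Δ a, Δ b⁆) := by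
  classical
  set n := Module.finrank ℂ L with hn
  -- finrank facts about the lower central series
  have h1r : Module.finrank ℂ (lowerCentralSeries ℂ L L 1) = n - 2 := by
    have h := hfil 1 le_rfl (by omega); omega
  have h2r : Module.finrank ℂ (lowerCentralSeries ℂ L L 2) = n - 3 := by
    have h := hfil 2 (by omega) (by omega); omega
  have hZr : Module.finrank ℂ (lowerCentralSeries ℂ L L (n - 2)) = 1 := by
    have h := hfil (n - 2) (by omega) (by omega); omega
  have hbotr : Module.finrank ℂ (lowerCentralSeries ℂ L L (n - 1)) = 0 := by
    have h := hfil (n - 1) (by omega) le_rfl; omega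
  have hbot' : ∀ x ∈ lowerCentralSeries ℂ L L (n - 1), x = 0 := by
    intro x hx
    have hb : (lowerCentralSeries ℂ L L (n - 1)).toSubmodule = ⊥ :=
      Submodule.finrank_eq_zero.mp hbotr
    have hb2 : lowerCentralSeries ℂ L L (n - 1) = ⊥ := by
      rwa [LieSubmodule.toSubmodule_eq_bot] at hb
    rwa [hb2, LieSubmodule.mem_bot] at hx
  -- centrality of the last nonzero term
  have hcent : ∀ (x u : L), u ∈ lowerCentralSeries ℂ L L (n - 2) → ⁅x, u⁆ = 0 := by
    intro x u hu
    apply hbot'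
    have h : ⁅x, u⁆ ∈ ⁅(⊤ : LieIdeal ℂ L), lowerCentralSeries ℂ L L (n - 2)⁆ :=
      LieSubmodule.lie_mem_lie (LieSubmodule.mem_top x) hu
    rw [← LieModule.lowerCentralSeries_succ] at h
    have e : n - 2 + 1 = n - 1 := by omega
    rwa [e] at h
  have hcent' : ∀ (x u : L), u ∈ lowerCentralSeries ℂ L L (n - 2) → ⁅u, x⁆ = 0 := by
    intro x u hu
    rw [← lie_skew, hcent x u hu, neg_zero]
  -- basic bracket memberships
  have hmem1 : ∀ a b : L, ⁅a, b⁆ ∈ lowerCentralSeries ℂ L L 1 := by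
    intro a b
    have h := lcs_bracket_mem (R := ℂ) 0 0 a b (by simp) (by simp)
    simpa using h
  have hmem2 : ∀ (a u : L), u ∈ lowerCentralSeries ℂ L L 1 →
      ⁅a, u⁆ ∈ lowerCentralSeries ℂ L L 2 := by
    intro a u hu
    have h := lcs_bracket_mem (R := ℂ) 0 1 a u (by simp) hu
    simpa using h
  have hmem2' : ∀ (u a : L), u ∈ lowerCentralSeries ℂ L L 1 →
      ⁅u, a⁆ ∈ lowerCentralSeries ℂ L L 2 := by
    intro u a hu
    have h := lcs_bracket_mem (R := ℂ) 1 0 u a hu (by simp)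
    simpa using h
  -- existence of good elements p, q, w0
  have hPexists : ¬ ∀ v y : L, ⁅v, y⁆ ∈ lowerCentralSeries ℂ L L 2 := by
    intro hall
    have hle : lowerCentralSeries ℂ L L 1 ≤ lowerCentralSeries ℂ L L 2 := by
      have e : lowerCentralSeries ℂ L L 1
          = ⁅(⊤ : LieIdeal ℂ L), lowerCentralSeries ℂ L L 0⁆ := LieModule.lowerCentralSeries_succ ℂ L L 0
      rw [e]
      exact (LieSubmodule.lie_le_iff _ _ _).mpr fun x _ m _ => hall x m
    have hfr : Module.finrank ℂ (lowerCentralSeries ℂ L L 1)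
        ≤ Module.finrank ℂ (lowerCentralSeries ℂ L L 2) :=
      Submodule.finrank_mono ((LieSubmodule.toSubmodule_le_toSubmodule _ _).mpr hle)
    omega
  have hQexists : ¬ ∀ v : L, ∀ u ∈ lowerCentralSeries ℂ L L (n - 3), ⁅v, u⁆ = 0 := by
    intro hall
    have hle : lowerCentralSeries ℂ L L (n - 2) ≤ ⊥ := by
      have e : n - 2 = (n - 3) + 1 := by omega
      rw [e, LieModule.lowerCentralSeries_succ]
      exact (LieSubmodule.lie_le_iff _ _ _).mpr fun x _ m hm => by
        rw [LieSubmodule.mem_bot]; exact hall x m hm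
    have h0 : lowerCentralSeries ℂ L L (n - 2) = ⊥ := le_bot_iff.mp hle
    have : Module.finrank ℂ (lowerCentralSeries ℂ L L (n - 2)) = 0 := by
      rw [h0]
      exact Submodule.finrank_eq_zero.mpr LieSubmodule.bot_toSubmodule
    omega
  obtain ⟨p, hPA, w0, hw0mem, hw0ne⟩ :
      ∃ p : L, (∃ y, ⁅p, y⁆ ∉ lowerCentralSeries ℂ L L 2) ∧
        ∃ w0 ∈ lowerCentralSeries ℂ L L (n - 3), ⁅p, w0⁆ ≠ 0 := by
    push_neg at hPexists hQexists
    obtain ⟨p1, y1, hy1⟩ := hPexists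
    obtain ⟨p2, w2, hw2m, hw2⟩ := hQexists
    by_cases hb : ∃ u ∈ lowerCentralSeries ℂ L L (n - 3), ⁅p1, u⁆ ≠ 0
    · exact ⟨p1, ⟨y1, hy1⟩, hb⟩
    by_cases ha : ∃ y, ⁅p2, y⁆ ∉ lowerCentralSeries ℂ L L 2
    · exact ⟨p2, ha, w2, hw2m, hw2⟩
    push_neg at hb ha
    refine ⟨p1 + p2, ⟨y1, ?_⟩, w2, hw2m, ?_⟩
    · intro hmem
      apply hy1
      have e : ⁅p1, y1⁆ = ⁅p1 + p2, y1⁆ - ⁅p2, y1⁆ := by rw [add_lie]; abel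
      rw [e]
      exact sub_mem hmem (ha y1)
    · rw [add_lie, hb w2 hw2m, zero_add]; exact hw2
  obtain ⟨q, hcq⟩ := hPA
  set c := ⁅p, q⁆ with hcdef
  have hc1 : c ∈ lowerCentralSeries ℂ L L 1 := hmem1 p q
  have hcne : c ≠ 0 := fun h => hcq (by rw [h]; exact zero_mem _)
  -- scalar cancellation helper
  have hsmul_canc : ∀ (t : ℂ) (x : L) (k : ℕ), t ≠ 0 →
      t • x ∈ lowerCentralSeries ℂ L L k → x ∈ lowerCentralSeries ℂ L L k := by
    intro t x k ht hx
    rw [← LieSubmodule.mem_toSubmodule] at hx ⊢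
    exact (Submodule.smul_mem_iff _ ht).mp hx
  -- quotient by [L, L]
  set N1 : Submodule ℂ L := (lowerCentralSeries ℂ L L 1).toSubmodule with hN1
  set π : L →ₗ[ℂ] L ⧸ N1 := N1.mkQ with hπdef
  have hπ0 : ∀ u : L, u ∈ lowerCentralSeries ℂ L L 1 → π u = 0 := by
    intro u hu
    rw [hπdef, Submodule.mkQ_apply, Submodule.Quotient.mk_eq_zero]
    exact hu
  have hker : ∀ u : L, π u = 0 → u ∈ lowerCentralSeries ℂ L L 1 := by
    intro u hu
    rw [hπdef, Submodule.mkQ_apply, Submodule.Quotient.mk_eq_zero] at hu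
    exact hu
  have hquotrank : Module.finrank ℂ (L ⧸ N1) = 2 := by
    have h := Submodule.finrank_quotient_add_finrank N1
    have hr : Module.finrank ℂ N1 = n - 2 := h1r
    omega
  have hindep : ∀ s t : ℂ, s • p + t • q ∈ lowerCentralSeries ℂ L L 1 → s = 0 ∧ t = 0 := by
    intro s t hst
    have hb : ⁅p, s • p + t • q⁆ ∈ lowerCentralSeries ℂ L L 2 := hmem2 p _ hst
    rw [lie_add, lie_smul, lie_smul, lie_self, smul_zero, zero_add] at hb
    have ht : t = 0 := by
      by_contra ht
      exact hcq (hsmul_canc t c 2 ht hb)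
    subst ht
    rw [zero_smul, add_zero] at hst
    have hs : s = 0 := by
      by_contra hs
      have hpm : p ∈ lowerCentralSeries ℂ L L 1 := hsmul_canc s p 1 hs hst
      exact hcq (hmem2' p q hpm)
    exact ⟨hs, rfl⟩
  have hli : LinearIndependent ℂ ![π p, π q] := by
    rw [LinearIndependent.pair_iff]
    intro s t hst
    apply hindep s t
    apply hker
    rw [map_add, map_smul, map_smul]
    exact hst
  have hcard : Fintype.card (Fin 2) = Module.finrank ℂ (L ⧸ N1) := by
    simp [hquotrank]
  let B : Module.Basis (Fin 2) ℂ (L ⧸ N1) := basisOfLinearIndependentOfCardEqFinrank hli hcard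
  have hB : ⇑B = ![π p, π q] := coe_basisOfLinearIndependentOfCardEqFinrank hli hcard
  set φ1 : L →ₗ[ℂ] ℂ := (B.coord 0) ∘ₗ π with hφ1def
  set φ2 : L →ₗ[ℂ] ℂ := (B.coord 1) ∘ₗ π with hφ2def
  have hBp : B 0 = π p := by rw [hB]; simp
  have hBq : B 1 = π q := by rw [hB]; simp
  have hφ1p : φ1 p = 1 := by
    rw [hφ1def]
    simp [LinearMap.comp_apply, ← hBp, Module.Basis.coord_apply, Module.Basis.repr_self]
  have hφ1q : φ1 q = 0 := by
    rw [hφ1def]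
    simp [LinearMap.comp_apply, ← hBq, Module.Basis.coord_apply, Module.Basis.repr_self]
  have hφ2p : φ2 p = 0 := by
    rw [hφ2def]
    simp [LinearMap.comp_apply, ← hBp, Module.Basis.coord_apply, Module.Basis.repr_self]
  have hφ2q : φ2 q = 1 := by
    rw [hφ2def]
    simp [LinearMap.comp_apply, ← hBq, Module.Basis.coord_apply, Module.Basis.repr_self]
  have hφ10 : ∀ u ∈ lowerCentralSeries ℂ L L 1, φ1 u = 0 := by
    intro u hu
    rw [hφ1def]
    simp [LinearMap.comp_apply, hπ0 u hu]
  have hφ20 : ∀ u ∈ lowerCentralSeries ℂ L L 1, φ2 u = 0 := by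
    intro u hu
    rw [hφ2def]
    simp [LinearMap.comp_apply, hπ0 u hu]
  have hdecomp : ∀ a : L, a - φ1 a • p - φ2 a • q ∈ lowerCentralSeries ℂ L L 1 := by
    intro a
    apply hker
    have hrepr : π a = φ1 a • π p + φ2 a • π q := by
      have h := B.sum_repr (π a)
      rw [Fin.sum_univ_two, hBp, hBq] at h
      rw [hφ1def, hφ2def]
      simp only [LinearMap.comp_apply, Module.Basis.coord_apply]
      exact h.symm
    rw [map_sub, map_sub, map_smul, map_smul, hrepr]
    abel
  -- the functional φ3
  set N2 : Submodule ℂ L := (lowerCentralSeries ℂ L L 2).toSubmodule with hN2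
  set π2 : L →ₗ[ℂ] L ⧸ N2 := N2.mkQ with hπ2def
  have hc2 : π2 c ≠ 0 := by
    rw [hπ2def, Submodule.mkQ_apply, ne_eq, Submodule.Quotient.mk_eq_zero]
    exact hcq
  obtain ⟨g, hg⟩ : ∃ g : Module.Dual ℂ (L ⧸ N2), g (π2 c) ≠ 0 := by
    by_contra h
    push_neg at h
    exact hc2 ((Module.forall_dual_apply_eq_zero_iff ℂ _).mp h)
  set φ3 : L →ₗ[ℂ] ℂ := (g (π2 c))⁻¹ • (g ∘ₗ π2) with hφ3def
  have hφ3c : φ3 c = 1 := by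
    rw [hφ3def]
    simp only [LinearMap.smul_apply, LinearMap.comp_apply, smul_eq_mul]
    exact inv_mul_cancel₀ hg
  have hφ30 : ∀ u ∈ lowerCentralSeries ℂ L L 2, φ3 u = 0 := by
    intro u hu
    have h2 : π2 u = 0 := by
      rw [hπ2def, Submodule.mkQ_apply, Submodule.Quotient.mk_eq_zero]
      exact hu
    rw [hφ3def]
    simp [LinearMap.comp_apply, h2]
  -- choice of w
  obtain ⟨w, hwmem, hzne, hφ2w, hφ3z⟩ :
      ∃ w ∈ lowerCentralSeries ℂ L L (n - 3), ⁅p, w⁆ ≠ 0 ∧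
        (φ2 w = 0 ∨ φ2 w = 1) ∧ (φ3 ⁅p, w⁆ = 0 ∨ φ3 ⁅p, w⁆ = 1) := by
    by_cases hcase : lowerCentralSeries ℂ L L (n - 3) ≤ lowerCentralSeries ℂ L L 1
    · exact ⟨w0, hw0mem, hw0ne, Or.inl (hφ20 _ (hcase hw0mem)),
        Or.inl (hφ30 _ (hmem2 p w0 (hcase hw0mem)))⟩
    · have h0 : n - 3 = 0 := by
        by_contra h0
        exact hcase (antitone_lowerCentralSeries ℂ L L (by omega))
      have htop : w0 ∈ (⊤ : LieSubmodule ℂ L L) → True := fun _ => trivial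
      have hqmem : q ∈ lowerCentralSeries ℂ L L (n - 3) := by
        rw [h0]
        simp
      exact ⟨q, hqmem, by rw [← hcdef]; exact hcne, Or.inr hφ2q,
        Or.inr (by rw [← hcdef]; exact hφ3c)⟩
  set z := ⁅p, w⁆ with hzdef
  have hzmem : z ∈ lowerCentralSeries ℂ L L (n - 2) := by
    have h : z ∈ ⁅(⊤ : LieIdeal ℂ L), lowerCentralSeries ℂ L L (n - 3)⁆ :=
      LieSubmodule.lie_mem_lie (LieSubmodule.mem_top p) hwmem
    rw [← LieModule.lowerCentralSeries_succ] at h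
    have e : n - 3 + 1 = n - 2 := by omega
    rwa [e] at h
  have hz1 : z ∈ lowerCentralSeries ℂ L L 1 :=
    antitone_lowerCentralSeries ℂ L L (by omega : 1 ≤ n - 2) hzmem
  have hzc : ∀ x : L, ⁅x, z⁆ = 0 := fun x => hcent x z hzmem
  have hzc' : ∀ x : L, ⁅z, x⁆ = 0 := fun x => hcent' x z hzmem
  have hφ2z : φ2 z = 0 := hφ20 z hz1
  have hwp : ⁅w, p⁆ = -z := by rw [hzdef, ← lie_skew]
  have hwu : ∀ u ∈ lowerCentralSeries ℂ L L 1, ⁅w, u⁆ = 0 := by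
    intro u hu
    apply hbot'
    have h := lcs_bracket_mem (R := ℂ) (n - 3) 1 w u hwmem hu
    have e : n - 3 + 1 + 1 = n - 1 := by omega
    rwa [e] at h
  obtain ⟨γ, hγ⟩ : ∃ γ : ℂ, ⁅w, q⁆ = γ • z := by
    have hm : ⁅w, q⁆ ∈ lowerCentralSeries ℂ L L (n - 2) := by
      have h1 : ⁅q, w⁆ ∈ lowerCentralSeries ℂ L L (n - 2) := by
        have h : ⁅q, w⁆ ∈ ⁅(⊤ : LieIdeal ℂ L), lowerCentralSeries ℂ L L (n - 3)⁆ :=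
          LieSubmodule.lie_mem_lie (LieSubmodule.mem_top q) hwmem
        rw [← LieModule.lowerCentralSeries_succ] at h
        have e : n - 3 + 1 = n - 2 := by omega
        rwa [e] at h
      have e : ⁅w, q⁆ = -⁅q, w⁆ := by rw [lie_skew]
      rw [e]
      exact neg_mem h1
    have hz' : (⟨z, hzmem⟩ : lowerCentralSeries ℂ L L (n - 2)) ≠ 0 := by
      intro h
      exact hzne (by simpa [Subtype.ext_iff] using h)
    obtain ⟨γ, hγ⟩ := (finrank_eq_one_iff_of_nonzero' _ hz').mp hZr ⟨⁅w, q⁆, hm⟩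
    refine ⟨γ, ?_⟩
    have := congrArg (Subtype.val) hγ
    simpa using this.symm
  -- bracket decomposition
  have hbr : ∀ a b : L, ∃ r ∈ lowerCentralSeries ℂ L L 2,
      ⁅a, b⁆ = (φ1 a * φ2 b - φ2 a * φ1 b) • c + r := by
    intro a b
    set a' := a - φ1 a • p - φ2 a • q with ha'
    set b' := b - φ1 b • p - φ2 b • q with hb'
    have ha'mem := hdecomp a
    have hb'mem := hdecomp b
    rw [← ha'] at ha'mem
    rw [← hb'] at hb'mem
    refine ⟨φ1 a • ⁅p, b'⁆ + φ2 a • ⁅q, b'⁆ + φ1 b • ⁅a', p⁆ + φ2 b • ⁅a', q⁆ + ⁅a', b'⁆,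
      ?_, ?_⟩
    · exact add_mem (add_mem (add_mem (add_mem
        (SMulMemClass.smul_mem _ (hmem2 p b' hb'mem))
        (SMulMemClass.smul_mem _ (hmem2 q b' hb'mem)))
        (SMulMemClass.smul_mem _ (hmem2' a' p ha'mem)))
        (SMulMemClass.smul_mem _ (hmem2' a' q ha'mem)))
        (hmem2' a' b' ha'mem)
    · have ea : a = φ1 a • p + φ2 a • q + a' := by rw [ha']; abel
      have eb : b = φ1 b • p + φ2 b • q + b' := by rw [hb']; abel
      have hqp : ⁅q, p⁆ = -c := by rw [hcdef, ← lie_skew]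
      conv_lhs => rw [ea, eb]
      simp only [add_lie, lie_add, smul_lie, lie_smul, lie_self, smul_zero, zero_add,
        add_zero, smul_smul, hqp, hcdef]
      module
  have hφ3br : ∀ a b : L, φ3 ⁅a, b⁆ = φ1 a * φ2 b - φ2 a * φ1 b := by
    intro a b
    obtain ⟨r, hr, he⟩ := hbr a b
    have hrm : r ∈ lowerCentralSeries ℂ L L 2 := hr
    rw [he, map_add, map_smul, hφ3c, hφ30 r hrm, smul_eq_mul, mul_one, add_zero]
  have hφ2br : ∀ a b : L, φ2 ⁅a, b⁆ = 0 := fun a b => hφ20 _ (hmem1 a b)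
  -- the key automorphism moving elements of [L,L]
  have hwb : ∀ b : L, ⁅w, b⁆ = (γ * φ2 b) • z - φ1 b • z := by
    intro b
    have hb'mem := hdecomp b
    have eb : b = φ1 b • p + φ2 b • q + (b - φ1 b • p - φ2 b • q) := by abel
    conv_lhs => rw [eb]
    rw [lie_add, lie_add, lie_smul, lie_smul, hwp, hγ, hwu _ hb'mem, add_zero, smul_neg,
      smul_smul]
    module
  set D : L →ₗ[ℂ] L := φ2.smulRight w + φ3.smulRight z with hDdef
  set ΦD : L →ₗ[ℂ] L := LinearMap.id + D with hΦDdef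
  have hΦDapp : ∀ x : L, ΦD x = x + (φ2 x • w + φ3 x • z) := by
    intro x
    rw [hΦDdef, hDdef]
    simp [LinearMap.add_apply, LinearMap.smulRight_apply]
  have hmultD : ∀ a b : L, ΦD ⁅a, b⁆ = ⁅ΦD a, ΦD b⁆ := by
    intro a b
    rw [hΦDapp, hΦDapp, hΦDapp, hφ2br a b, zero_smul, zero_add, hφ3br a b]
    have haw : ⁅a, w⁆ = -⁅w, a⁆ := by rw [lie_skew]
    simp only [lie_add, add_lie, lie_smul, smul_lie, hzc, hzc', lie_zero, zero_lie,
      smul_zero, add_zero, zero_add, lie_self, haw, hwb]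
    module
  have hinjD : Function.Injective ΦD := by
    rw [← LinearMap.ker_eq_bot]
    rw [LinearMap.ker_eq_bot']
    intro x hx
    rw [hΦDapp] at hx
    have h2 : φ2 x = 0 := by
      have h := congrArg φ2 hx
      simp only [map_add, map_smul, hφ2z, smul_eq_mul, mul_zero, add_zero, map_zero] at h
      rcases hφ2w with hcw | hcw <;> rw [hcw] at h
      · linear_combination h
      · linear_combination h / 2
    rw [h2, zero_smul, zero_add] at hx
    have h3 : φ3 x = 0 := by
      have h := congrArg φ3 hx
      simp only [map_add, map_smul, smul_eq_mul, map_zero] at h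
      rcases hφ3z with hcz | hcz <;> rw [hcz] at h
      · linear_combination h
      · linear_combination h / 2
    rw [h3, zero_smul, add_zero] at hx
    exact hx
  have hbijD : Function.Bijective ΦD :=
    ⟨hinjD, LinearMap.injective_iff_surjective.mp hinjD⟩
  -- the global map Δ
  set Δ : L →ₗ[ℂ] L := LinearMap.id + φ3.smulRight z with hΔdef
  have hΔapp : ∀ x : L, Δ x = x + φ3 x • z := by
    intro x
    rw [hΔdef]
    simp [LinearMap.add_apply, LinearMap.smulRight_apply]
  refine ⟨Δ, ?_, ?_⟩
  · intro x
    by_cases hx1 : x ∈ lowerCentralSeries ℂ L L 1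
    · refine ⟨ΦD, ⟨hbijD, hmultD⟩, ?_⟩
      rw [hΔapp, hΦDapp, hφ20 x hx1, zero_smul, zero_add]
    · -- x outside [L,L]
      have hπx : π x ≠ 0 := fun h => hx1 (hker x h)
      obtain ⟨h, hh⟩ : ∃ h : Module.Dual ℂ (L ⧸ N1), h (π x) ≠ 0 := by
        by_contra hcon
        push_neg at hcon
        exact hπx ((Module.forall_dual_apply_eq_zero_iff ℂ _).mp hcon)
      set η : L →ₗ[ℂ] ℂ := (h (π x))⁻¹ • (h ∘ₗ π) with hηdef
      have hηx : η x = 1 := by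
        rw [hηdef]
        simp only [LinearMap.smul_apply, LinearMap.comp_apply, smul_eq_mul]
        exact inv_mul_cancel₀ hh
      have hη0 : ∀ u ∈ lowerCentralSeries ℂ L L 1, η u = 0 := by
        intro u hu
        rw [hηdef]
        simp [LinearMap.comp_apply, hπ0 u hu]
      set Φ : L →ₗ[ℂ] L := LinearMap.id + (φ3 x • η).smulRight z with hΦdef
      have hΦapp : ∀ y : L, Φ y = y + (φ3 x * η y) • z := by
        intro y
        rw [hΦdef]
        simp [LinearMap.add_apply, LinearMap.smulRight_apply, smul_eq_mul]
      have hmult : ∀ a b : L, Φ ⁅a, b⁆ = ⁅Φ a, Φ b⁆ := by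
        intro a b
        rw [hΦapp, hΦapp, hΦapp, hη0 _ (hmem1 a b), mul_zero, zero_smul, add_zero]
        simp only [lie_add, add_lie, lie_smul, smul_lie, hzc, hzc', smul_zero,
          add_zero, zero_add]
      have hinj : Function.Injective Φ := by
        rw [← LinearMap.ker_eq_bot, LinearMap.ker_eq_bot']
        intro y hy
        rw [hΦapp] at hy
        have hη : η y = 0 := by
          have hc := congrArg η hy
          simp only [map_add, map_smul, smul_eq_mul, map_zero,
            hη0 z hz1, mul_zero, add_zero] at hc
          exact hc
        rw [hη, mul_zero, zero_smul, add_zero] at hy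
        exact hy
      refine ⟨Φ, ⟨⟨hinj, LinearMap.injective_iff_surjective.mp hinj⟩, hmult⟩, ?_⟩
      rw [hΔapp, hΦapp, hηx, mul_one]
  · rintro ⟨-, hm⟩
    have h := hm p q
    rw [hΔapp, hΔapp, hΔapp, ← hcdef, hφ3c, one_smul] at h
    simp only [lie_add, add_lie, lie_smul, smul_lie, hzc, hzc', smul_zero,
      add_zero, zero_add, ← hcdef] at h
    exact hzne (add_eq_left.mp h)
end

section
/- Let L be a finite-dimensional complex filiform Lie algebra of dimension n ≥ 3 with a basis e₁, …, e_n satisfying [e₁, e_i] = e_{i+1} for all 2 ≤ i ≤ n − 1. Define the linear operator Δ on L by Δ(x) = x + x₃ e_n, where x = Σ_{k=1}^n x_k e_k. Then Δ is a local automorphism of L which is not an automorphism of L. -/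
set_option maxHeartbeats 1600000 in
theorem filiform_delta_localAut_not_aut (n : ℕ) (hn : 3 ≤ n)
    (L : Type*) [LieRing L] [LieAlgebra ℂ L] [Module.Finite ℂ L]
    [LieRing.IsNilpotent L]
    (b : Module.Basis (Fin n) ℂ L)
    (hfil : ∀ k : ℕ, 1 ≤ k → k ≤ n - 1 →
      Module.finrank ℂ (LieModule.lowerCentralSeries ℂ L L k) = n - k - 1)
    (hbase : ∀ (i : Fin n) (h1 : 1 ≤ i.val) (h2 : i.val ≤ n - 2),
      ⁅b ⟨0, by omega⟩, b i⁆ = b ⟨i.val + 1, by omega⟩)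
    (Δ : L →ₗ[ℂ] L)
    (hΔ : ∀ x : L, Δ x = x + (b.repr x ⟨2, by omega⟩) • b ⟨n - 1, by omega⟩) :
    (∀ x : L, ∃ Φ : L →ₗ[ℂ] L,
      (Function.Bijective Φ ∧ ∀ a c : L, Φ ⁅a, c⁆ = ⁅Φ a, Φ c⁆) ∧ Δ x = Φ x) ∧
    ¬ (Function.Bijective Δ ∧ ∀ x y : L, Δ ⁅x, y⁆ = ⁅Δ x, Δ y⁆) := by
  classical
  haveI : FiniteDimensional ℂ L := ‹Module.Finite ℂ L›
  -- basis elements lie deep in the lower central series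
  have hmem : ∀ k : ℕ, ∀ (h : k + 1 < n), b ⟨k + 1, h⟩ ∈ LieModule.lowerCentralSeries ℂ L L k := by
    intro k
    induction k with
    | zero => intro h; simp
    | succ k ih =>
      intro h
      have hb := hbase ⟨k + 1, by omega⟩ (by simp) (by simp; omega)
      have : (⟨(k : ℕ) + 1 + 1, by omega⟩ : Fin n) = ⟨k + 1 + 1, h⟩ := rfl
      rw [this] at hb
      rw [LieModule.lowerCentralSeries_succ, ← hb]
      exact LieSubmodule.lie_mem_lie (LieSubmodule.mem_top _) (ih (by omega))
  -- last term of the series is zero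
  have hbotmem : ∀ x : L, x ∈ LieModule.lowerCentralSeries ℂ L L (n - 1) → x = 0 := by
    have hf := hfil (n - 1) (by omega) le_rfl
    rw [show n - (n - 1) - 1 = 0 from by omega] at hf
    have hb : (LieModule.lowerCentralSeries ℂ L L (n - 1) : Submodule ℂ L) = ⊥ :=
      Submodule.finrank_eq_zero.mp hf
    intro x hx
    have : x ∈ (LieModule.lowerCentralSeries ℂ L L (n - 1) : Submodule ℂ L) := hx
    rw [hb] at this
    simpa using this
  have hmem' : ∀ (i : Fin n) (k : ℕ), k + 1 ≤ i.val →
      b i ∈ LieModule.lowerCentralSeries ℂ L L k := by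
    intro i k hk
    have h1 : i.val - 1 + 1 < n := by omega
    have h := hmem (i.val - 1) h1
    have e : (⟨i.val - 1 + 1, h1⟩ : Fin n) = i := by ext; simp; omega
    rw [e] at h
    exact LieModule.antitone_lowerCentralSeries ℂ L L (by omega) h
  -- e_n is central
  have hcentR : ∀ y : L, ⁅y, b ⟨n - 1, by omega⟩⁆ = 0 := by
    intro y
    apply hbotmem
    have e : LieModule.lowerCentralSeries ℂ L L (n - 1)
        = LieModule.lowerCentralSeries ℂ L L (n - 2 + 1) := by
      rw [show n - 2 + 1 = n - 1 from by omega]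
    rw [e, LieModule.lowerCentralSeries_succ]
    exact LieSubmodule.lie_mem_lie (LieSubmodule.mem_top _)
      (hmem' _ (n - 2) (by simp; omega))
  have hcentL : ∀ y : L, ⁅b ⟨n - 1, by omega⟩, y⁆ = 0 := by
    intro y; rw [← lie_skew, hcentR, neg_zero]
  -- L^{n-2} is spanned by e_n
  have hspan : (LieModule.lowerCentralSeries ℂ L L (n - 2) : Submodule ℂ L)
      = Submodule.span ℂ {b ⟨n - 1, by omega⟩} := by
    symm
    apply Submodule.eq_of_le_of_finrank_le
    · rw [Submodule.span_le, Set.singleton_subset_iff]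
      exact hmem' ⟨n - 1, by omega⟩ (n - 2) (by simp; omega)
    · have hf := hfil (n - 2) (by omega) (by omega)
      rw [show n - (n - 2) - 1 = 1 from by omega] at hf
      have : Module.finrank ℂ
          (LieModule.lowerCentralSeries ℂ L L (n - 2) : Submodule ℂ L) = 1 := hf
      rw [this, finrank_span_singleton (b.ne_zero _)]
  have hLam : ∀ y : L, ∃ c : ℂ, ⁅y, b ⟨n - 2, by omega⟩⁆ = c • b ⟨n - 1, by omega⟩ := by
    intro y
    have h : ⁅y, b ⟨n - 2, by omega⟩⁆ ∈ LieModule.lowerCentralSeries ℂ L L (n - 3 + 1) := by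
      rw [LieModule.lowerCentralSeries_succ]
      exact LieSubmodule.lie_mem_lie (LieSubmodule.mem_top _)
        (hmem' _ (n - 3) (by simp; omega))
    have e : LieModule.lowerCentralSeries ℂ L L (n - 3 + 1)
        = LieModule.lowerCentralSeries ℂ L L (n - 2) := by
      rw [show n - 3 + 1 = n - 2 from by omega]
    rw [e] at h
    have : ⁅y, b ⟨n - 2, by omega⟩⁆ ∈ Submodule.span ℂ {b ⟨n - 1, by omega⟩} := by
      rw [← hspan]; exact h
    rcases Submodule.mem_span_singleton.mp this with ⟨c, hc⟩
    exact ⟨c, hc.symm⟩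
  -- e_{n-1} annihilates e_j for j ≥ 3 (1-indexed)
  have hFa : ∀ j : Fin n, 2 ≤ j.val → ⁅b ⟨n - 2, by omega⟩, b j⁆ = 0 := by
    intro j hj
    have hbj : b j = ⁅b ⟨0, by omega⟩, b ⟨j.val - 1, by omega⟩⁆ := by
      have h := hbase ⟨j.val - 1, by omega⟩ (by simp; omega) (by simp; omega)
      have e : (⟨(j.val - 1 : ℕ) + 1, by omega⟩ : Fin n) = j := by ext; simp; omega
      rw [e] at h
      exact h.symm
    rw [hbj, leibniz_lie]
    have h1 : ⁅b ⟨n - 2, by omega⟩, b ⟨0, by omega⟩⁆ = -b ⟨n - 1, by omega⟩ := by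
      rw [← lie_skew]
      have h := hbase ⟨n - 2, by omega⟩ (by simp; omega) (by simp)
      have e : (⟨(n - 2 : ℕ) + 1, by omega⟩ : Fin n) = ⟨n - 1, by omega⟩ := by
        ext; simp; omega
      rw [e] at h
      rw [h]
    rcases hLam (b ⟨j.val - 1, by omega⟩) with ⟨c, hc⟩
    have h2 : ⁅b ⟨n - 2, by omega⟩, b ⟨j.val - 1, by omega⟩⁆
        = -(c • b ⟨n - 1, by omega⟩) := by
      rw [← lie_skew, hc]
    rw [h1, h2, neg_lie, hcentL, lie_neg, lie_smul, hcentR]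
    simp
  -- coordinates 0,1,2 of elements of L^2 vanish
  have hrepr2 : ∀ x : L, x ∈ LieModule.lowerCentralSeries ℂ L L 2 →
      ∀ k : Fin n, k.val ≤ 2 → b.repr x k = 0 := by
    set v : Fin (n - 3) → L := fun k => b ⟨k.val + 3, by omega⟩ with hv
    have hli : LinearIndependent ℂ v := by
      apply b.linearIndependent.comp
      intro a a' h
      have h' := congrArg Fin.val h
      simp only at h'
      exact Fin.ext (by omega)
    have hle : Submodule.span ℂ (Set.range v)
        ≤ (LieModule.lowerCentralSeries ℂ L L 2 : Submodule ℂ L) := by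
      rw [Submodule.span_le]
      rintro _ ⟨k, rfl⟩
      exact LieModule.antitone_lowerCentralSeries ℂ L L (show 2 ≤ k.val + 2 by omega)
        (hmem' _ (k.val + 2) (by simp))
    have heq : Submodule.span ℂ (Set.range v)
        = (LieModule.lowerCentralSeries ℂ L L 2 : Submodule ℂ L) := by
      apply Submodule.eq_of_le_of_finrank_le hle
      rw [finrank_span_eq_card hli]
      have hf := hfil 2 (by omega) (by omega)
      have : Module.finrank ℂ
          (LieModule.lowerCentralSeries ℂ L L 2 : Submodule ℂ L) = n - 2 - 1 := hf
      rw [this]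
      simp
      omega
    have key : ∀ y ∈ Submodule.span ℂ (Set.range v), ∀ k : Fin n, k.val ≤ 2 →
        b.repr y k = 0 := by
      intro y hy
      induction hy using Submodule.span_induction with
      | mem y hy =>
        rcases hy with ⟨j, rfl⟩
        intro k hk
        rw [hv]
        simp only [Module.Basis.repr_self]
        rw [Finsupp.single_apply, if_neg]
        intro h
        have h' := congrArg Fin.val h
        simp only at h'
        omega
      | zero => intro k hk; simp
      | add y z _ _ hy hz => intro k hk; simp [hy k hk, hz k hk]
      | smul c y _ hy => intro k hk; simp [hy k hk]
    intro x hx k hk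
    exact key x (by rw [heq]; exact hx) k hk
  have hbr2 : ∀ (y : L) (j : Fin n), 2 ≤ j.val →
      ⁅y, b j⁆ ∈ LieModule.lowerCentralSeries ℂ L L 2 := by
    intro y j hj
    have h : ⁅y, b j⁆ ∈ LieModule.lowerCentralSeries ℂ L L (j.val - 1 + 1) := by
      rw [LieModule.lowerCentralSeries_succ]
      exact LieSubmodule.lie_mem_lie (LieSubmodule.mem_top _)
        (hmem' j (j.val - 1) (by omega))
    exact LieModule.antitone_lowerCentralSeries ℂ L L (show 2 ≤ j.val - 1 + 1 by omega) h
  have hcoord : ∀ (i j : Fin n), 1 ≤ i.val → 1 ≤ j.val → ∀ k : Fin n, k.val ≤ 2 →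
      b.repr ⁅b i, b j⁆ k = 0 := by
    intro i j hi hj k hk
    rcases Nat.lt_or_ge j.val 2 with hj2 | hj2
    · rcases Nat.lt_or_ge i.val 2 with hi2 | hi2
      · have : i = j := Fin.ext (by omega)
        rw [this, lie_self]; simp
      · rw [← lie_skew, map_neg]
        simp only [Finsupp.coe_neg, Pi.neg_apply]
        rw [hrepr2 _ (hbr2 (b j) i hi2) k hk]
        simp
    · exact hrepr2 _ (hbr2 (b i) j hj2) k hk
  -- swap and bilinear-extension helpers
  have hswap : ∀ (Φ : L →ₗ[ℂ] L) (i j : Fin n),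
      Φ ⁅b i, b j⁆ = ⁅Φ (b i), Φ (b j)⁆ → Φ ⁅b j, b i⁆ = ⁅Φ (b j), Φ (b i)⁆ := by
    intro Φ i j h
    rw [show ⁅b j, b i⁆ = -⁅b i, b j⁆ from (lie_skew _ _).symm, map_neg, h,
      show ⁅Φ (b j), Φ (b i)⁆ = -⁅Φ (b i), Φ (b j)⁆ from (lie_skew _ _).symm]
  have hext : ∀ (Φ : L →ₗ[ℂ] L),
      (∀ i j : Fin n, Φ ⁅b i, b j⁆ = ⁅Φ (b i), Φ (b j)⁆) →
      ∀ x y : L, Φ ⁅x, y⁆ = ⁅Φ x, Φ y⁆ := by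
    intro Φ h x y
    let B1 : L →ₗ[ℂ] L →ₗ[ℂ] L := LinearMap.mk₂ ℂ (fun x y => Φ ⁅x, y⁆)
      (fun a a' y => by simp only [add_lie, map_add])
      (fun c a y => by simp only [smul_lie, map_smul])
      (fun a y y' => by simp only [lie_add, map_add])
      (fun c a y => by simp only [lie_smul, map_smul])
    let B2 : L →ₗ[ℂ] L →ₗ[ℂ] L := LinearMap.mk₂ ℂ (fun x y => ⁅Φ x, Φ y⁆)
      (fun a a' y => by simp only [map_add, add_lie])
      (fun c a y => by simp only [map_smul, smul_lie])
      (fun a y y' => by simp only [map_add, lie_add])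
      (fun c a y => by simp only [map_smul, lie_smul])
    have hB : B1 = B2 := LinearMap.ext_basis b b (fun i j => by
      simpa [B1, B2, LinearMap.mk₂_apply] using h i j)
    have := DFunLike.congr_fun (DFunLike.congr_fun hB x) y
    simpa [B1, B2, LinearMap.mk₂_apply] using this
  -- if-kill helpers for the central element
  have klie : ∀ (z : L) (p : Prop) (hp : Decidable p),
      ⁅z, @ite _ p hp (b ⟨n - 1, by omega⟩) 0⁆ = 0 := by
    intro z p hp; split_ifs <;> simp [hcentR]
  have krlie : ∀ (z : L) (p : Prop) (hp : Decidable p),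
      ⁅@ite _ p hp (b ⟨n - 1, by omega⟩) 0, z⁆ = 0 := by
    intro z p hp; split_ifs <;> simp [hcentL]
  have hb2 : ⁅b ⟨0, by omega⟩, b ⟨n - 2, by omega⟩⁆ = b ⟨n - 1, by omega⟩ := by
    have h := hbase ⟨n - 2, by omega⟩ (by simp; omega) (by simp)
    rw [h]
    congr 1
    exact Fin.ext (by simp; omega)
  -- multiplicativity of Φ₂ = id + c • E'
  have hmul2 : ∀ c : ℂ, ∀ x y : L,
      (LinearMap.id + c • LinearMap.smulRight (b.coord ⟨1, by omega⟩) (b ⟨n - 1, by omega⟩)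
        : L →ₗ[ℂ] L) ⁅x, y⁆
      = ⁅(LinearMap.id + c • LinearMap.smulRight (b.coord ⟨1, by omega⟩) (b ⟨n - 1, by omega⟩)
        : L →ₗ[ℂ] L) x,
         (LinearMap.id + c • LinearMap.smulRight (b.coord ⟨1, by omega⟩) (b ⟨n - 1, by omega⟩)
        : L →ₗ[ℂ] L) y⁆ := by
    intro c
    set Φ : L →ₗ[ℂ] L :=
      LinearMap.id + c • LinearMap.smulRight (b.coord ⟨1, by omega⟩) (b ⟨n - 1, by omega⟩)
      with hΦ
    apply hext
    have hΦb : ∀ j : Fin n, Φ (b j)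
        = b j + (if j = (⟨1, by omega⟩ : Fin n) then c • b ⟨n - 1, by omega⟩ else 0) := by
      intro j
      by_cases hj : j = (⟨1, by omega⟩ : Fin n) <;>
        simp [hΦ, Module.Basis.coord_apply, Module.Basis.repr_self, Finsupp.single_apply, hj]
    have h01 : ((⟨0, by omega⟩ : Fin n)) ≠ (⟨1, by omega⟩ : Fin n) := by
      simp [Fin.ext_iff]
    have key0 : ∀ j : Fin n, Φ ⁅b ⟨0, by omega⟩, b j⁆ = ⁅Φ (b ⟨0, by omega⟩), Φ (b j)⁆ := by
      intro j
      rcases Nat.eq_zero_or_pos j.val with hj0 | hj1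
      · have hj : j = ⟨0, by omega⟩ := Fin.ext (by simpa using hj0)
        rw [hj]
        simp [lie_self]
      rcases Nat.lt_or_ge j.val (n - 1) with hjn | hjn
      · have hb1 := hbase j (by omega) (by omega)
        have h1 : ((⟨j.val + 1, by omega⟩ : Fin n)) ≠ (⟨1, by omega⟩ : Fin n) := by
          simp [Fin.ext_iff] <;> omega
        rw [hb1, hΦb, hΦb, hΦb, if_neg h1, if_neg h01]
        by_cases hj : j = (⟨1, by omega⟩ : Fin n)
        · rw [if_pos hj]
          simp [lie_add, lie_smul, hcentR, hb1]
        · rw [if_neg hj]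
          simp [lie_add, hb1]
      · have hj : j = ⟨n - 1, by omega⟩ := Fin.ext (by simp; omega)
        have h1 : ((⟨n - 1, by omega⟩ : Fin n)) ≠ (⟨1, by omega⟩ : Fin n) := by
          simp [Fin.ext_iff] <;> omega
        rw [hj, hcentR, map_zero, hΦb, hΦb, if_neg h1, if_neg h01]
        simp [lie_add, hcentR]
    intro i j
    rcases Nat.eq_zero_or_pos i.val with hi0 | hi1
    · have hi : i = ⟨0, by omega⟩ := Fin.ext (by simpa using hi0)
      rw [hi]; exact key0 j
    rcases Nat.eq_zero_or_pos j.val with hj0 | hj1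
    · have hj : j = ⟨0, by omega⟩ := Fin.ext (by simpa using hj0)
      rw [hj]; exact hswap Φ _ _ (key0 i)
    have hL : Φ ⁅b i, b j⁆ = ⁅b i, b j⁆ := by
      have h0 := hcoord i j hi1 hj1 ⟨1, by omega⟩ (by simp)
      simp [hΦ, Module.Basis.coord_apply, h0]
    rw [hL]
    simp only [hΦb]
    by_cases hi : i = (⟨1, by omega⟩ : Fin n) <;>
      by_cases hj : j = (⟨1, by omega⟩ : Fin n) <;>
        simp [hi, hj, lie_add, add_lie, lie_smul, smul_lie, hcentR, hcentL]
  -- multiplicativity of Φ₁ = id + E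
  have hmul1 : ∀ x y : L,
      (LinearMap.id + LinearMap.smulRight (b.coord ⟨1, by omega⟩) (b ⟨n - 2, by omega⟩)
        + LinearMap.smulRight (b.coord ⟨2, by omega⟩) (b ⟨n - 1, by omega⟩) : L →ₗ[ℂ] L) ⁅x, y⁆
      = ⁅(LinearMap.id + LinearMap.smulRight (b.coord ⟨1, by omega⟩) (b ⟨n - 2, by omega⟩)
        + LinearMap.smulRight (b.coord ⟨2, by omega⟩) (b ⟨n - 1, by omega⟩) : L →ₗ[ℂ] L) x,
         (LinearMap.id + LinearMap.smulRight (b.coord ⟨1, by omega⟩) (b ⟨n - 2, by omega⟩)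
        + LinearMap.smulRight (b.coord ⟨2, by omega⟩) (b ⟨n - 1, by omega⟩) : L →ₗ[ℂ] L) y⁆ := by
    set Φ : L →ₗ[ℂ] L :=
      LinearMap.id + LinearMap.smulRight (b.coord ⟨1, by omega⟩) (b ⟨n - 2, by omega⟩)
        + LinearMap.smulRight (b.coord ⟨2, by omega⟩) (b ⟨n - 1, by omega⟩) with hΦ
    apply hext
    have hΦb : ∀ j : Fin n, Φ (b j)
        = b j + (if j = (⟨1, by omega⟩ : Fin n) then b ⟨n - 2, by omega⟩ else 0)
            + (if j = (⟨2, by omega⟩ : Fin n) then b ⟨n - 1, by omega⟩ else 0) := by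
      intro j
      by_cases hj1 : j = (⟨1, by omega⟩ : Fin n) <;>
        by_cases hj2 : j = (⟨2, by omega⟩ : Fin n) <;>
          simp [hΦ, Module.Basis.coord_apply, Module.Basis.repr_self, Finsupp.single_apply, hj1, hj2]
    have h01 : ((⟨0, by omega⟩ : Fin n)) ≠ (⟨1, by omega⟩ : Fin n) := by
      simp [Fin.ext_iff]
    have h02 : ((⟨0, by omega⟩ : Fin n)) ≠ (⟨2, by omega⟩ : Fin n) := by
      simp [Fin.ext_iff]
    have key0 : ∀ j : Fin n, Φ ⁅b ⟨0, by omega⟩, b j⁆ = ⁅Φ (b ⟨0, by omega⟩), Φ (b j)⁆ := by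
      intro j
      rcases Nat.eq_zero_or_pos j.val with hj0 | hj1
      · have hj : j = ⟨0, by omega⟩ := Fin.ext (by simpa using hj0)
        rw [hj]
        simp [lie_self]
      rcases Nat.lt_or_ge j.val (n - 1) with hjn | hjn
      · have hb1 := hbase j (by omega) (by omega)
        have e1 : ((⟨j.val + 1, by omega⟩ : Fin n)) ≠ (⟨1, by omega⟩ : Fin n) := by
          simp [Fin.ext_iff] <;> omega
        rw [hb1, hΦb, hΦb, hΦb, if_neg e1, if_neg h01, if_neg h02]
        by_cases hj1' : j = (⟨1, by omega⟩ : Fin n)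
        · have hjv : j.val = 1 := by rw [hj1']
          have e2 : ((⟨j.val + 1, by omega⟩ : Fin n)) = (⟨2, by omega⟩ : Fin n) :=
            Fin.ext (by simp [hjv])
          rw [if_pos e2, if_pos hj1']
          simp [lie_add, hb1, hb2, klie]
        · have e2 : ((⟨j.val + 1, by omega⟩ : Fin n)) ≠ (⟨2, by omega⟩ : Fin n) := by
            have hjv : j.val ≠ 1 := fun h => hj1' (Fin.ext (by simpa using h))
            simp [Fin.ext_iff] <;> omega
          rw [if_neg e2, if_neg hj1']
          simp [lie_add, hb1, klie]
      · have hj : j = ⟨n - 1, by omega⟩ := Fin.ext (by simp; omega)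
        have e1 : ((⟨n - 1, by omega⟩ : Fin n)) ≠ (⟨1, by omega⟩ : Fin n) := by
          simp [Fin.ext_iff] <;> omega
        rw [hj, hcentR, map_zero, hΦb, hΦb, if_neg e1, if_neg h01, if_neg h02]
        simp [lie_add, hcentR, klie]
    intro i j
    by_cases hij : i = j
    · rw [hij]
      simp [lie_self]
    rcases Nat.eq_zero_or_pos i.val with hi0 | hi1
    · have hi : i = ⟨0, by omega⟩ := Fin.ext (by simpa using hi0)
      rw [hi]; exact key0 j
    rcases Nat.eq_zero_or_pos j.val with hj0 | hj1
    · have hj : j = ⟨0, by omega⟩ := Fin.ext (by simpa using hj0)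
      rw [hj]; exact hswap Φ _ _ (key0 i)
    have hL : Φ ⁅b i, b j⁆ = ⁅b i, b j⁆ := by
      have h1 := hcoord i j hi1 hj1 ⟨1, by omega⟩ (by simp)
      have h2 := hcoord i j hi1 hj1 ⟨2, by omega⟩ (by simp)
      simp [hΦ, Module.Basis.coord_apply, h1, h2]
    rw [hL]
    simp only [hΦb]
    by_cases hI : i = (⟨1, by omega⟩ : Fin n)
    · have hJ : ¬ j = (⟨1, by omega⟩ : Fin n) := fun h => hij (hI.trans h.symm)
      have hjge : 2 ≤ j.val := by
        have : j.val ≠ 1 := fun h => hJ (Fin.ext (by simpa using h))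
        omega
      have f1 : ⁅b ⟨n - 2, by omega⟩, b j⁆ = 0 := hFa j hjge
      rw [if_pos hI, if_neg hJ]
      simp [lie_add, add_lie, klie, krlie, f1]
    · by_cases hJ : j = (⟨1, by omega⟩ : Fin n)
      · have hige : 2 ≤ i.val := by
          have : i.val ≠ 1 := fun h => hI (Fin.ext (by simpa using h))
          omega
        have f2 : ⁅b i, b ⟨n - 2, by omega⟩⁆ = 0 := by
          rw [← lie_skew, hFa i hige, neg_zero]
        rw [if_pos hJ, if_neg hI]
        simp [lie_add, add_lie, klie, krlie, f2]
      · rw [if_neg hI, if_neg hJ]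
        simp [lie_add, add_lie, klie, krlie]
  -- injectivity of the two maps
  have hne11 : ((⟨n - 1, by omega⟩ : Fin n)) ≠ (⟨1, by omega⟩ : Fin n) := by
    simp [Fin.ext_iff] <;> omega
  have hinj2 : ∀ c : ℂ, Function.Injective
      (LinearMap.id + c • LinearMap.smulRight (b.coord ⟨1, by omega⟩) (b ⟨n - 1, by omega⟩)
        : L →ₗ[ℂ] L) := by
    intro c
    rw [injective_iff_map_eq_zero]
    intro x hx
    have hx' : x + (c * b.repr x ⟨1, by omega⟩) • b ⟨n - 1, by omega⟩ = 0 := by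
      simpa [Module.Basis.coord_apply, smul_smul] using hx
    have h1 := congrArg (fun y => b.repr y (⟨1, by omega⟩ : Fin n)) hx'
    simp only [map_add, map_smul, Module.Basis.repr_self, map_zero, Finsupp.coe_add,
      Finsupp.coe_zero, Pi.add_apply, Pi.zero_apply, Finsupp.smul_single,
      Finsupp.single_apply, smul_eq_mul, mul_one] at h1
    rw [if_neg hne11] at h1
    simp only [mul_zero, add_zero] at h1
    rw [h1] at hx'
    simpa using hx'
  have hinj1 : Function.Injective
      (LinearMap.id + LinearMap.smulRight (b.coord ⟨1, by omega⟩) (b ⟨n - 2, by omega⟩)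
        + LinearMap.smulRight (b.coord ⟨2, by omega⟩) (b ⟨n - 1, by omega⟩) : L →ₗ[ℂ] L) := by
    rw [injective_iff_map_eq_zero]
    intro x hx
    have hx' : x + (b.repr x ⟨1, by omega⟩) • b ⟨n - 2, by omega⟩
        + (b.repr x ⟨2, by omega⟩) • b ⟨n - 1, by omega⟩ = 0 := by
      simpa [Module.Basis.coord_apply] using hx
    have h1 := congrArg (fun y => b.repr y (⟨1, by omega⟩ : Fin n)) hx'
    have h2 := congrArg (fun y => b.repr y (⟨2, by omega⟩ : Fin n)) hx'
    simp only [map_add, map_smul, Module.Basis.repr_self, map_zero, Finsupp.coe_add,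
      Finsupp.coe_zero, Pi.add_apply, Pi.zero_apply, Finsupp.smul_single,
      Finsupp.single_apply, smul_eq_mul, mul_one] at h1 h2
    rw [if_neg hne11] at h1
    have hr1 : b.repr x ⟨1, by omega⟩ = 0 := by
      by_cases hc : ((⟨n - 2, by omega⟩ : Fin n)) = (⟨1, by omega⟩ : Fin n)
      · rw [if_pos hc] at h1
        have h2' : (2 : ℂ) * b.repr x ⟨1, by omega⟩ = 0 := by ring_nf; linear_combination h1
        have := mul_eq_zero.mp h2'
        simpa using this
      · rw [if_neg hc] at h1
        simpa using h1
    have hr2 : b.repr x ⟨2, by omega⟩ = 0 := by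
      rw [hr1, ite_self] at h2
      by_cases hc : ((⟨n - 1, by omega⟩ : Fin n)) = (⟨2, by omega⟩ : Fin n)
      · rw [if_pos hc] at h2
        have h2' : (2 : ℂ) * b.repr x ⟨2, by omega⟩ = 0 := by ring_nf; linear_combination h2
        have := mul_eq_zero.mp h2'
        simpa using this
      · rw [if_neg hc] at h2
        simpa using h2
    rw [hr1, hr2] at hx'
    simpa using hx'
  constructor
  · -- Δ is a local automorphism
    intro x
    by_cases hx1 : b.repr x ⟨1, by omega⟩ = 0
    · refine ⟨LinearMap.id + LinearMap.smulRight (b.coord ⟨1, by omega⟩) (b ⟨n - 2, by omega⟩)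
        + LinearMap.smulRight (b.coord ⟨2, by omega⟩) (b ⟨n - 1, by omega⟩),
        ⟨⟨hinj1, LinearMap.injective_iff_surjective.mp hinj1⟩, hmul1⟩, ?_⟩
      rw [hΔ x]
      simp [Module.Basis.coord_apply, hx1]
    · refine ⟨LinearMap.id + (b.repr x ⟨2, by omega⟩ / b.repr x ⟨1, by omega⟩) •
        LinearMap.smulRight (b.coord ⟨1, by omega⟩) (b ⟨n - 1, by omega⟩),
        ⟨⟨hinj2 _, LinearMap.injective_iff_surjective.mp (hinj2 _)⟩, hmul2 _⟩, ?_⟩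
      rw [hΔ x]
      simp [Module.Basis.coord_apply, smul_smul, div_mul_cancel₀ _ hx1]
  · -- Δ is not an automorphism
    rintro ⟨-, hm⟩
    have h01 : ⁅b ⟨0, by omega⟩, b ⟨1, by omega⟩⁆ = b ⟨2, by omega⟩ := by
      have h := hbase ⟨1, by omega⟩ (by simp) (by simp; omega)
      exact h
    have hd0 : Δ (b ⟨0, by omega⟩) = b ⟨0, by omega⟩ := by
      rw [hΔ]
      have : b.repr (b ⟨0, by omega⟩) (⟨2, by omega⟩ : Fin n) = 0 := by
        rw [Module.Basis.repr_self, Finsupp.single_apply, if_neg (by simp [Fin.ext_iff])]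
      rw [this]
      simp
    have hd1 : Δ (b ⟨1, by omega⟩) = b ⟨1, by omega⟩ := by
      rw [hΔ]
      have : b.repr (b ⟨1, by omega⟩) (⟨2, by omega⟩ : Fin n) = 0 := by
        rw [Module.Basis.repr_self, Finsupp.single_apply, if_neg (by simp [Fin.ext_iff])]
      rw [this]
      simp
    have hd2 : Δ (b ⟨2, by omega⟩) = b ⟨2, by omega⟩ + b ⟨n - 1, by omega⟩ := by
      rw [hΔ]
      have : b.repr (b ⟨2, by omega⟩) (⟨2, by omega⟩ : Fin n) = 1 := by
        rw [Module.Basis.repr_self, Finsupp.single_apply, if_pos rfl]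
      rw [this]
      simp
    have key := hm (b ⟨0, by omega⟩) (b ⟨1, by omega⟩)
    rw [h01, hd0, hd1, hd2, h01] at key
    have : b ⟨n - 1, by omega⟩ = 0 := by
      have := key
      rwa [add_eq_left] at this
    exact b.ne_zero _ this
end
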